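/- arXiv:1002.1016 — 2 statements merged into one kernel-verified Lean document; each statement's English description precedes it below -/
import Mathlib

section
/- In the Manhattan MTM on the N×N grid, the number of one-corner Manhattan paths that start at (i', j') and visit (i, j) is: 2N − i − j if i' < i and j' < j; i + j + 2 if i' > i and j' > j; N + 1 − i + j if i' < i and j' > j; N + 1 + i − j if i' > i and j' < j; N² − Nj if i' = i, j' < j; N² − Ni if i' < i, j' = j; N + Nj if i' = i, j' > j; N + Ni if i' > i, j' = j; and 2N² − 2N + 1 if (i', j') = (i, j). -/
open Finset

/-- The horizontal-then-vertical one-corner Manhattan path from `u` to `w`,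
as its set of grid points. -/
def pathHV (u w : ℕ × ℕ) : Finset (ℕ × ℕ) :=
  ((Finset.Icc (min u.1 w.1) (max u.1 w.1)).image fun x => (x, u.2)) ∪
    ((Finset.Icc (min u.2 w.2) (max u.2 w.2)).image fun y => (w.1, y))

/-- The vertical-then-horizontal one-corner Manhattan path from `u` to `w`,
as its set of grid points. -/
def pathVH (u w : ℕ × ℕ) : Finset (ℕ × ℕ) :=
  ((Finset.Icc (min u.2 w.2) (max u.2 w.2)).image fun y => (u.1, y)) ∪
    ((Finset.Icc (min u.1 w.1) (max u.1 w.1)).image fun x => (x, w.2))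

/-- The set of one-corner Manhattan paths starting at `u` with destination in the
`N × N` grid (the two corner choices coincide when a coordinate is shared). -/
def manhattanPaths (N : ℕ) (u : ℕ × ℕ) : Finset (Finset (ℕ × ℕ)) :=
  ((Finset.range N ×ˢ Finset.range N).image (pathHV u)) ∪
    ((Finset.range N ×ˢ Finset.range N).image (pathVH u))

/-- `η(u, v)`: the number of one-corner Manhattan paths starting at `u` that visit `v`. -/
def η (N : ℕ) (u v : ℕ × ℕ) : ℕ :=
  ((manhattanPaths N u).filter fun P => v ∈ P).card

lemma mem_pathHV {u w v : ℕ × ℕ} : v ∈ pathHV u w ↔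
    (v.2 = u.2 ∧ min u.1 w.1 ≤ v.1 ∧ v.1 ≤ max u.1 w.1) ∨
    (v.1 = w.1 ∧ min u.2 w.2 ≤ v.2 ∧ v.2 ≤ max u.2 w.2) := by
  simp [pathHV, Prod.ext_iff]; aesop
lemma mem_pathVH {u w v : ℕ × ℕ} : v ∈ pathVH u w ↔
    (v.1 = u.1 ∧ min u.2 w.2 ≤ v.2 ∧ v.2 ≤ max u.2 w.2) ∨
    (v.2 = w.2 ∧ min u.1 w.1 ≤ v.1 ∧ v.1 ≤ max u.1 w.1) := by
  simp [pathVH, Prod.ext_iff]; aesop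

lemma icc_minmax_inj {a b c : ℕ}
    (h : Finset.Icc (min a b) (max a b) = Finset.Icc (min a c) (max a c)) : b = c := by
  have a1 : min a b ∈ Finset.Icc (min a c) (max a c) := by
    rw [← h]; simp only [Finset.mem_Icc]; omega
  have a2 : min a c ∈ Finset.Icc (min a b) (max a b) := by
    rw [h]; simp only [Finset.mem_Icc]; omega
  have a3 : max a b ∈ Finset.Icc (min a c) (max a c) := by
    rw [← h]; simp only [Finset.mem_Icc]; omega
  have a4 : max a c ∈ Finset.Icc (min a b) (max a b) := by
    rw [h]; simp only [Finset.mem_Icc]; omega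
  simp only [Finset.mem_Icc] at a1 a2 a3 a4
  omega

lemma image_fst_pathHV (u w : ℕ × ℕ) :
    (pathHV u w).image Prod.fst = Finset.Icc (min u.1 w.1) (max u.1 w.1) := by
  ext a
  simp only [Finset.mem_image, Finset.mem_Icc]
  constructor
  · rintro ⟨v, hv, rfl⟩
    rcases mem_pathHV.1 hv with ⟨-, h⟩ | ⟨h, -⟩ <;> omega
  · intro h
    exact ⟨(a, u.2), mem_pathHV.2 (Or.inl ⟨rfl, h⟩), rfl⟩

lemma image_snd_pathHV (u w : ℕ × ℕ) :
    (pathHV u w).image Prod.snd = Finset.Icc (min u.2 w.2) (max u.2 w.2) := by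
  ext a
  simp only [Finset.mem_image, Finset.mem_Icc]
  constructor
  · rintro ⟨v, hv, rfl⟩
    rcases mem_pathHV.1 hv with ⟨h, -⟩ | ⟨-, h⟩ <;> omega
  · intro h
    exact ⟨(w.1, a), mem_pathHV.2 (Or.inr ⟨rfl, h⟩), rfl⟩

lemma image_fst_pathVH (u w : ℕ × ℕ) :
    (pathVH u w).image Prod.fst = Finset.Icc (min u.1 w.1) (max u.1 w.1) := by
  ext a
  simp only [Finset.mem_image, Finset.mem_Icc]
  constructor
  · rintro ⟨v, hv, rfl⟩
    rcases mem_pathVH.1 hv with ⟨h, -⟩ | ⟨-, h⟩ <;> omega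
  · intro h
    exact ⟨(a, w.2), mem_pathVH.2 (Or.inr ⟨rfl, h⟩), rfl⟩

lemma image_snd_pathVH (u w : ℕ × ℕ) :
    (pathVH u w).image Prod.snd = Finset.Icc (min u.2 w.2) (max u.2 w.2) := by
  ext a
  simp only [Finset.mem_image, Finset.mem_Icc]
  constructor
  · rintro ⟨v, hv, rfl⟩
    rcases mem_pathVH.1 hv with ⟨-, h⟩ | ⟨h, -⟩ <;> omega
  · intro h
    exact ⟨(u.1, a), mem_pathVH.2 (Or.inl ⟨rfl, h⟩), rfl⟩

lemma pathHV_injective (u : ℕ × ℕ) : Function.Injective (pathHV u) := by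
  intro w w' h
  have h1 := congrArg (Finset.image Prod.fst) h
  have h2 := congrArg (Finset.image Prod.snd) h
  rw [image_fst_pathHV, image_fst_pathHV] at h1
  rw [image_snd_pathHV, image_snd_pathHV] at h2
  exact Prod.ext (icc_minmax_inj h1) (icc_minmax_inj h2)

lemma pathVH_injective (u : ℕ × ℕ) : Function.Injective (pathVH u) := by
  intro w w' h
  have h1 := congrArg (Finset.image Prod.fst) h
  have h2 := congrArg (Finset.image Prod.snd) h
  rw [image_fst_pathVH, image_fst_pathVH] at h1
  rw [image_snd_pathVH, image_snd_pathVH] at h2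
  exact Prod.ext (icc_minmax_inj h1) (icc_minmax_inj h2)

lemma pathHV_eq_pathVH_iff {u w w' : ℕ × ℕ} :
    pathHV u w = pathVH u w' ↔ w = w' ∧ (u.1 = w.1 ∨ u.2 = w.2) := by
  constructor
  · intro h
    have h1 := congrArg (Finset.image Prod.fst) h
    have h2 := congrArg (Finset.image Prod.snd) h
    rw [image_fst_pathHV, image_fst_pathVH] at h1
    rw [image_snd_pathHV, image_snd_pathVH] at h2
    have hw : w = w' := Prod.ext (icc_minmax_inj h1) (icc_minmax_inj h2)
    subst hw
    refine ⟨rfl, ?_⟩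
    by_contra hc
    push_neg at hc
    have hm : (w.1, u.2) ∈ pathVH u w := by
      rw [← h]
      exact mem_pathHV.2 (Or.inl ⟨rfl, by omega, by omega⟩)
    rcases mem_pathVH.1 hm with ⟨h', -⟩ | ⟨h', -⟩
    · exact hc.1 h'.symm
    · exact hc.2 h'
  · rintro ⟨rfl, hd⟩
    ext v
    rw [mem_pathHV, mem_pathVH]
    rcases hd with h | h <;> rw [h] <;> constructor <;> rintro (⟨e, h1, h2⟩ | ⟨e, h1, h2⟩) <;>
      simp_all <;> omega

lemma inter_images (N : ℕ) (u : ℕ × ℕ) :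
    ((Finset.range N ×ˢ Finset.range N).image (pathHV u)) ∩
      ((Finset.range N ×ˢ Finset.range N).image (pathVH u)) =
    (((Finset.range N ×ˢ Finset.range N).filter fun w => u.1 = w.1 ∨ u.2 = w.2).image (pathHV u)) := by
  ext P
  simp only [Finset.mem_inter, Finset.mem_image, Finset.mem_filter]
  constructor
  · rintro ⟨⟨w, hw, rfl⟩, ⟨w', hw', he⟩⟩
    have := pathHV_eq_pathVH_iff.1 he.symm
    exact ⟨w, ⟨hw, this.2⟩, rfl⟩
  · rintro ⟨w, ⟨hw, hd⟩, rfl⟩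
    exact ⟨⟨w, hw, rfl⟩, ⟨w, hw, (pathHV_eq_pathVH_iff.2 ⟨rfl, hd⟩).symm⟩⟩

lemma eta_key (N : ℕ) (u v : ℕ × ℕ) :
    η N u v + (((Finset.range N ×ˢ Finset.range N).filter fun w =>
        (u.1 = w.1 ∨ u.2 = w.2) ∧ v ∈ pathHV u w).card)
    = (((Finset.range N ×ˢ Finset.range N).filter fun w => v ∈ pathHV u w).card)
      + (((Finset.range N ×ˢ Finset.range N).filter fun w => v ∈ pathVH u w).card) := by
  unfold η manhattanPaths
  rw [Finset.filter_union]
  set A := Finset.filter (fun P => v ∈ P) (Finset.image (pathHV u) (Finset.range N ×ˢ Finset.range N)) with hA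
  set B := Finset.filter (fun P => v ∈ P) (Finset.image (pathVH u) (Finset.range N ×ˢ Finset.range N)) with hB
  have key := Finset.card_union_add_card_inter A B
  have hAB : A ∩ B = (((Finset.range N ×ˢ Finset.range N).filter fun w =>
      (u.1 = w.1 ∨ u.2 = w.2) ∧ v ∈ pathHV u w).image (pathHV u)) := by
    rw [hA, hB, ← Finset.filter_inter_distrib, inter_images, Finset.filter_image,
      Finset.filter_filter]
  have cA : A.card = ((Finset.range N ×ˢ Finset.range N).filter fun w => v ∈ pathHV u w).card := by
    rw [hA, Finset.filter_image, Finset.card_image_of_injective _ (pathHV_injective u)]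
  have cB : B.card = ((Finset.range N ×ˢ Finset.range N).filter fun w => v ∈ pathVH u w).card := by
    rw [hB, Finset.filter_image, Finset.card_image_of_injective _ (pathVH_injective u)]
  have cAB : (A ∩ B).card = (((Finset.range N ×ˢ Finset.range N).filter fun w =>
      (u.1 = w.1 ∨ u.2 = w.2) ∧ v ∈ pathHV u w).card) := by
    rw [hAB, Finset.card_image_of_injective _ (pathHV_injective u)]
  omega

lemma eta_key' (N i' j' i j : ℕ) :
    η N (i', j') (i, j) + (((Finset.range N ×ˢ Finset.range N).filter fun w =>
        (i' = w.1 ∨ j' = w.2) ∧ ((i, j) : ℕ × ℕ) ∈ pathHV (i', j') w).card)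
    = (((Finset.range N ×ˢ Finset.range N).filter fun w =>
        ((i, j) : ℕ × ℕ) ∈ pathHV (i', j') w).card)
      + (((Finset.range N ×ˢ Finset.range N).filter fun w =>
        ((i, j) : ℕ × ℕ) ∈ pathVH (i', j') w).card) :=
  eta_key N (i', j') (i, j)

lemma count_prod_aux {N : ℕ} (P : ℕ × ℕ → Prop) [DecidablePred P] (s t : Finset ℕ)
    (h : ∀ a b : ℕ, ((a < N ∧ b < N) ∧ P (a, b)) ↔ (a ∈ s ∧ b ∈ t)) :
    ((Finset.range N ×ˢ Finset.range N).filter P).card = s.card * t.card := by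
  have e : (Finset.range N ×ˢ Finset.range N).filter P = s ×ˢ t := by
    ext ⟨a, b⟩
    simp only [Finset.mem_filter, Finset.mem_product, Finset.mem_range]
    exact h a b
  rw [e, Finset.card_product]


/-- The case formula for the number of one-corner Manhattan paths on the
`N × N` grid starting at `(i', j')` and visiting `(i, j)`. -/
theorem manhattan_eta_formula (N i j i' j' : ℕ)
    (hi : i < N) (hj : j < N) (hi' : i' < N) (hj' : j' < N) :
    (η N (i', j') (i, j) : ℤ) =
      if i' < i ∧ j' < j then 2 * N - i - j
      else if i < i' ∧ j < j' then i + j + 2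
      else if i' < i ∧ j < j' then N + 1 - i + j
      else if i < i' ∧ j' < j then N + 1 + i - j
      else if i' = i ∧ j' < j then N ^ 2 - N * j
      else if i' < i ∧ j' = j then N ^ 2 - N * i
      else if i' = i ∧ j < j' then N + N * j
      else if i < i' ∧ j' = j then N + N * i
      else 2 * N ^ 2 - 2 * N + 1 := by
  have hη := eta_key' N i' j' i j
  rcases lt_trichotomy i' i with h1 | h1 | h1 <;>
    rcases lt_trichotomy j' j with h2 | h2 | h2
  -- Case (i' < i, j' < j)
  · rw [count_prod_aux _ ∅ ∅ (by
          intro a b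
          simp only [mem_pathHV, Finset.notMem_empty, and_self, iff_false]
          omega),
        count_prod_aux _ {i} (Finset.Ico j N) (by
          intro a b
          simp only [mem_pathHV, Finset.mem_singleton, Finset.mem_Ico]
          omega),
        count_prod_aux _ (Finset.Ico i N) {j} (by
          intro a b
          simp only [mem_pathVH, Finset.mem_singleton, Finset.mem_Ico]
          omega)] at hη
    simp only [Finset.card_empty, Finset.card_singleton, Nat.card_Ico, Finset.card_range,
      mul_one, one_mul, mul_zero, zero_mul, add_zero] at hη
    rw [if_pos ⟨h1, h2⟩]
    omega
  -- Case (i' < i, j' = j)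
  · rw [count_prod_aux _ (Finset.Ico i N) {j} (by
          intro a b
          simp only [mem_pathHV, Finset.mem_singleton, Finset.mem_Ico]
          omega),
        count_prod_aux _ (Finset.Ico i N) (Finset.range N) (by
          intro a b
          simp only [mem_pathHV, Finset.mem_range, Finset.mem_Ico]
          omega),
        count_prod_aux _ (Finset.Ico i N) {j} (by
          intro a b
          simp only [mem_pathVH, Finset.mem_singleton, Finset.mem_Ico]
          omega)] at hη
    simp only [Finset.card_singleton, Nat.card_Ico, Finset.card_range,
      mul_one, one_mul] at hη
    have hval := Nat.add_right_cancel hη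
    rw [if_neg (by omega), if_neg (by omega), if_neg (by omega), if_neg (by omega),
      if_neg (by omega), if_pos (show i' < i ∧ j' = j by omega)]
    have e : (N - i) * N = N ^ 2 - N * i := by
      rw [Nat.sub_mul, pow_two, Nat.mul_comm i N]
    rw [hval, e]
  -- Case (i' < i, j < j')
  · rw [count_prod_aux _ ∅ ∅ (by
          intro a b
          simp only [mem_pathHV, Finset.notMem_empty, and_self, iff_false]
          omega),
        count_prod_aux _ {i} (Finset.range (j + 1)) (by
          intro a b
          simp only [mem_pathHV, Finset.mem_singleton, Finset.mem_range]
          omega),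
        count_prod_aux _ (Finset.Ico i N) {j} (by
          intro a b
          simp only [mem_pathVH, Finset.mem_singleton, Finset.mem_Ico]
          omega)] at hη
    simp only [Finset.card_empty, Finset.card_singleton, Nat.card_Ico, Finset.card_range,
      mul_one, one_mul, mul_zero, zero_mul, add_zero] at hη
    rw [if_neg (by omega), if_neg (by omega), if_pos (show i' < i ∧ j < j' by omega)]
    omega
  -- Case (i' = i, j' < j)
  · rw [count_prod_aux _ {i} (Finset.Ico j N) (by
          intro a b
          simp only [mem_pathHV, Finset.mem_singleton, Finset.mem_Ico]
          omega),
        count_prod_aux _ {i} (Finset.Ico j N) (by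
          intro a b
          simp only [mem_pathHV, Finset.mem_singleton, Finset.mem_Ico]
          omega),
        count_prod_aux _ (Finset.range N) (Finset.Ico j N) (by
          intro a b
          simp only [mem_pathVH, Finset.mem_range, Finset.mem_Ico]
          omega)] at hη
    simp only [Finset.card_singleton, Nat.card_Ico, Finset.card_range,
      mul_one, one_mul] at hη
    rw [Nat.add_comm (N - j) (N * (N - j))] at hη
    have hval := Nat.add_right_cancel hη
    rw [if_neg (by omega), if_neg (by omega), if_neg (by omega), if_neg (by omega),
      if_pos (show i' = i ∧ j' < j by omega)]
    have e : N * (N - j) = N ^ 2 - N * j := by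
      rw [Nat.mul_comm N (N - j), Nat.sub_mul, pow_two, Nat.mul_comm j N]
    rw [hval, e]
  -- Case (i' = i, j' = j)
  · have cDeg : ((Finset.range N ×ˢ Finset.range N).filter fun w =>
        (i' = w.1 ∨ j' = w.2) ∧ ((i, j) : ℕ × ℕ) ∈ pathHV (i', j') w).card = 2 * N - 1 := by
      have e : ((Finset.range N ×ˢ Finset.range N).filter fun w =>
          (i' = w.1 ∨ j' = w.2) ∧ ((i, j) : ℕ × ℕ) ∈ pathHV (i', j') w) =
          ({i'} ×ˢ Finset.range N) ∪ (Finset.range N ×ˢ ({j'} : Finset ℕ)) := by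
        ext ⟨a, b⟩
        simp only [Finset.mem_filter, Finset.mem_union, Finset.mem_product, Finset.mem_range,
          Finset.mem_singleton, mem_pathHV]
        omega
      have e2 : ({i'} ×ˢ Finset.range N) ∩ (Finset.range N ×ˢ ({j'} : Finset ℕ)) =
          {((i' : ℕ), (j' : ℕ))} := by
        ext ⟨a, b⟩
        simp only [Finset.mem_inter, Finset.mem_product, Finset.mem_singleton, Finset.mem_range,
          Prod.mk.injEq]
        omega
      have e3 := Finset.card_union_add_card_inter ({i'} ×ˢ Finset.range N)
        (Finset.range N ×ˢ ({j'} : Finset ℕ))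
      rw [e2] at e3
      simp only [Finset.card_product, Finset.card_singleton, Finset.card_range,
        mul_one, one_mul] at e3
      rw [e]
      omega
    rw [cDeg,
        count_prod_aux _ (Finset.range N) (Finset.range N) (by
          intro a b
          simp only [mem_pathHV, Finset.mem_range]
          omega),
        count_prod_aux _ (Finset.range N) (Finset.range N) (by
          intro a b
          simp only [mem_pathVH, Finset.mem_range]
          omega)] at hη
    simp only [Finset.card_range] at hη
    rw [if_neg (by omega), if_neg (by omega), if_neg (by omega), if_neg (by omega),
      if_neg (by omega), if_neg (by omega), if_neg (by omega), if_neg (by omega)]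
    have h1 : (1 : ℕ) ≤ 2 * N := by omega
    zify [h1] at hη
    have hle : N ≤ N ^ 2 := Nat.le_self_pow two_ne_zero N
    have h2 : 2 * N ≤ 2 * N ^ 2 := by linarith
    rw [show ((2 * N ^ 2 - 2 * N + 1 : ℕ) : ℤ) = 2 * (N : ℤ) ^ 2 - 2 * N + 1 from by
      push_cast [Nat.cast_sub h2]; ring]
    linear_combination hη
  -- Case (i' = i, j < j')
  · rw [count_prod_aux _ {i} (Finset.range (j + 1)) (by
          intro a b
          simp only [mem_pathHV, Finset.mem_singleton, Finset.mem_range]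
          omega),
        count_prod_aux _ {i} (Finset.range (j + 1)) (by
          intro a b
          simp only [mem_pathHV, Finset.mem_singleton, Finset.mem_range]
          omega),
        count_prod_aux _ (Finset.range N) (Finset.range (j + 1)) (by
          intro a b
          simp only [mem_pathVH, Finset.mem_range]
          omega)] at hη
    simp only [Finset.card_singleton, Finset.card_range, mul_one, one_mul] at hη
    rw [Nat.add_comm (j + 1) (N * (j + 1))] at hη
    have hval := Nat.add_right_cancel hη
    rw [if_neg (by omega), if_neg (by omega), if_neg (by omega), if_neg (by omega),
      if_neg (by omega), if_neg (by omega), if_pos (show i' = i ∧ j < j' by omega)]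
    rw [hval]
    push_cast
    ring
  -- Case (i < i', j' < j)
  · rw [count_prod_aux _ ∅ ∅ (by
          intro a b
          simp only [mem_pathHV, Finset.notMem_empty, and_self, iff_false]
          omega),
        count_prod_aux _ {i} (Finset.Ico j N) (by
          intro a b
          simp only [mem_pathHV, Finset.mem_singleton, Finset.mem_Ico]
          omega),
        count_prod_aux _ (Finset.range (i + 1)) {j} (by
          intro a b
          simp only [mem_pathVH, Finset.mem_singleton, Finset.mem_range]
          omega)] at hη
    simp only [Finset.card_empty, Finset.card_singleton, Nat.card_Ico, Finset.card_range,
      mul_one, one_mul, mul_zero, zero_mul, add_zero] at hη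
    rw [if_neg (by omega), if_neg (by omega), if_neg (by omega),
      if_pos (show i < i' ∧ j' < j by omega)]
    omega
  -- Case (i < i', j' = j)
  · rw [count_prod_aux _ (Finset.range (i + 1)) {j} (by
          intro a b
          simp only [mem_pathHV, Finset.mem_singleton, Finset.mem_range]
          omega),
        count_prod_aux _ (Finset.range (i + 1)) (Finset.range N) (by
          intro a b
          simp only [mem_pathHV, Finset.mem_range]
          omega),
        count_prod_aux _ (Finset.range (i + 1)) {j} (by
          intro a b
          simp only [mem_pathVH, Finset.mem_singleton, Finset.mem_range]
          omega)] at hη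
    simp only [Finset.card_singleton, Finset.card_range, mul_one, one_mul] at hη
    have hval := Nat.add_right_cancel hη
    rw [if_neg (by omega), if_neg (by omega), if_neg (by omega), if_neg (by omega),
      if_neg (by omega), if_neg (by omega), if_neg (by omega),
      if_pos (show i < i' ∧ j' = j by omega)]
    rw [hval]
    push_cast
    ring
  -- Case (i < i', j < j')
  · rw [count_prod_aux _ ∅ ∅ (by
          intro a b
          simp only [mem_pathHV, Finset.notMem_empty, and_self, iff_false]
          omega),
        count_prod_aux _ {i} (Finset.range (j + 1)) (by
          intro a b
          simp only [mem_pathHV, Finset.mem_singleton, Finset.mem_range]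
          omega),
        count_prod_aux _ (Finset.range (i + 1)) {j} (by
          intro a b
          simp only [mem_pathVH, Finset.mem_singleton, Finset.mem_range]
          omega)] at hη
    simp only [Finset.card_empty, Finset.card_singleton, Finset.card_range,
      mul_one, one_mul, mul_zero, zero_mul, add_zero] at hη
    rw [if_neg (by omega), if_pos (show i < i' ∧ j < j' by omega)]
    omega
end

section
/- The limiting spatial density of the Manhattan Random Way-Point on the square [0, L]²: writing s_ε(i, j) = 3((4N²−6N+2)(i+j) − (4N−2)(i²+j²) + 6N²−8N+3)/((N⁴−N²)(4N−2)) with N = ⌈L/ε⌉, i = ⌊(N/L)x⌋, j = ⌊(N/L)y⌋, then lim_{ε→0} (N/L)² · s_ε(⌊(N/L)x⌋, ⌊(N/L)y⌋) = (3/L³)(x + y) − (3/L⁴)(x² + y²) for every (x, y) in the open square (0, L)². -/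
open Filter

set_option maxHeartbeats 1000000 in
theorem key (L x y : ℝ) (hL : 0 < L) (hx0 : 0 < x) (hy0 : 0 < y) :
    Tendsto (fun N : ℕ =>
        ((N : ℝ) / L) ^ 2 *
          (3 * ((4 * (N : ℝ) ^ 2 - 6 * (N : ℝ) + 2) *
                ((⌊(N : ℝ) * x / L⌋₊ : ℝ) + (⌊(N : ℝ) * y / L⌋₊ : ℝ))
              - (4 * (N : ℝ) - 2) *
                ((⌊(N : ℝ) * x / L⌋₊ : ℝ) ^ 2 + (⌊(N : ℝ) * y / L⌋₊ : ℝ) ^ 2)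
              + 6 * (N : ℝ) ^ 2 - 8 * (N : ℝ) + 3) /
            (((N : ℝ) ^ 4 - (N : ℝ) ^ 2) * (4 * (N : ℝ) - 2))))
      atTop
      (nhds (3 / L ^ 3 * (x + y) - 3 / L ^ 4 * (x ^ 2 + y ^ 2))) := by
  have hL' : L ≠ 0 := hL.ne'
  have hxL0 : (0:ℝ) ≤ x / L := by positivity
  have hyL0 : (0:ℝ) ≤ y / L := by positivity
  have ha : Tendsto (fun n : ℕ => (⌊(x/L) * (n:ℝ)⌋₊ : ℝ) / n) atTop (nhds (x/L)) :=
    (tendsto_nat_floor_mul_div_atTop hxL0).comp tendsto_natCast_atTop_atTop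
  have hb : Tendsto (fun n : ℕ => (⌊(y/L) * (n:ℝ)⌋₊ : ℝ) / n) atTop (nhds (y/L)) :=
    (tendsto_nat_floor_mul_div_atTop hyL0).comp tendsto_natCast_atTop_atTop
  have ht : Tendsto (fun n : ℕ => ((n:ℝ))⁻¹) atTop (nhds 0) :=
    tendsto_inv_atTop_zero.comp tendsto_natCast_atTop_atTop
  -- continuous-at function of (t, a, b)
  have hcont : ContinuousAt (fun p : ℝ × ℝ × ℝ =>
      (1 / L ^ 2) * (3 * ((4 - 6 * p.1 + 2 * p.1 ^ 2) * (p.2.1 + p.2.2)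
        - (4 - 2 * p.1) * (p.2.1 ^ 2 + p.2.2 ^ 2)
        + p.1 * (6 - 8 * p.1 + 3 * p.1 ^ 2)) /
        ((1 - p.1 ^ 2) * (4 - 2 * p.1)))) (0, x / L, y / L) := by
    apply ContinuousAt.mul continuousAt_const
    exact ContinuousAt.div (by fun_prop) (by fun_prop) (by norm_num)
  have H := hcont.tendsto.comp (ht.prodMk_nhds (ha.prodMk_nhds hb))
  have Heq : ((fun p : ℝ × ℝ × ℝ =>
      (1 / L ^ 2) * (3 * ((4 - 6 * p.1 + 2 * p.1 ^ 2) * (p.2.1 + p.2.2)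
        - (4 - 2 * p.1) * (p.2.1 ^ 2 + p.2.2 ^ 2)
        + p.1 * (6 - 8 * p.1 + 3 * p.1 ^ 2)) /
        ((1 - p.1 ^ 2) * (4 - 2 * p.1)))) (0, x / L, y / L))
      = 3 / L ^ 3 * (x + y) - 3 / L ^ 4 * (x ^ 2 + y ^ 2) := by
    field_simp
    ring
  rw [← Heq]
  apply H.congr'
  filter_upwards [eventually_ge_atTop 2] with n hn
  have hn0 : (0:ℝ) < (n:ℝ) := by exact_mod_cast Nat.lt_of_lt_of_le Nat.zero_lt_two hn
  have hn1 : (1:ℝ) < (n:ℝ) := by exact_mod_cast Nat.lt_of_lt_of_le Nat.one_lt_two hn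
  have hne : (n:ℝ) ≠ 0 := hn0.ne'
  have h2 : (n:ℝ) ^ 4 - (n:ℝ) ^ 2 ≠ 0 := by
    have h1' : (1:ℝ) < (n:ℝ) ^ 2 := by nlinarith
    have hp : (0:ℝ) < (n:ℝ) ^ 2 * ((n:ℝ) ^ 2 - 1) := mul_pos (by positivity) (by linarith)
    nlinarith
  have h3 : 4 * (n:ℝ) - 2 ≠ 0 := by nlinarith
  have h4 : 1 - ((n:ℝ)⁻¹) ^ 2 ≠ 0 := by
    have : ((n:ℝ)⁻¹) ^ 2 < 1 := by
      rw [sq_lt_one_iff_abs_lt_one, abs_of_pos (by positivity)]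
      exact inv_lt_one_of_one_lt₀ hn1
    linarith
  have h5 : 4 - 2 * ((n:ℝ)⁻¹) ≠ 0 := by
    have : ((n:ℝ)⁻¹) < 1 := inv_lt_one_of_one_lt₀ hn1
    have : (0:ℝ) < (n:ℝ)⁻¹ := by positivity
    nlinarith
  have hfx : (⌊(x/L) * (n:ℝ)⌋₊ : ℝ) = (⌊(n:ℝ) * x / L⌋₊ : ℝ) := by
    congr 1
    rw [div_mul_eq_mul_div, mul_comm]
  have hfy : (⌊(y/L) * (n:ℝ)⌋₊ : ℝ) = (⌊(n:ℝ) * y / L⌋₊ : ℝ) := by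
    congr 1
    rw [div_mul_eq_mul_div, mul_comm]
  simp only [Function.comp_apply, hfx, hfy]
  have hD : (((n:ℝ) ^ 4 - (n:ℝ) ^ 2) * (4 * (n:ℝ) - 2)) ≠ 0 := mul_ne_zero h2 h3
  have hE : ((1 - ((n:ℝ)⁻¹) ^ 2) * (4 - 2 * ((n:ℝ)⁻¹))) ≠ 0 := mul_ne_zero h4 h5
  simp only [← mul_div_assoc]
  rw [div_eq_div_iff hE hD]
  field_simp
  ring

/-- The rescaled discrete spatial distribution of the Manhattan MTM
converges, as the resolution `ε → 0⁺`, to the continuous spatial density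
`(3/L³)(x + y) − (3/L⁴)(x² + y²)` at every interior point `(x, y)` of `(0, L)²`.
Here `N = ⌈L/ε⌉`, `i = ⌊Nx/L⌋`, `j = ⌊Ny/L⌋`, and
`s_ε(i,j) = 3((4N²−6N+2)(i+j) − (4N−2)(i²+j²) + 6N²−8N+3)/((N⁴−N²)(4N−2))`. -/
theorem manhattan_spatial_density_limit (L x y : ℝ) (hL : 0 < L)
    (hx0 : 0 < x) (hxL : x < L) (hy0 : 0 < y) (hyL : y < L) :
    Tendsto (fun ε : ℝ =>
        ((⌈L / ε⌉₊ : ℝ) / L) ^ 2 *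
          (3 * ((4 * (⌈L / ε⌉₊ : ℝ) ^ 2 - 6 * (⌈L / ε⌉₊ : ℝ) + 2) *
                ((⌊(⌈L / ε⌉₊ : ℝ) * x / L⌋₊ : ℝ) + (⌊(⌈L / ε⌉₊ : ℝ) * y / L⌋₊ : ℝ))
              - (4 * (⌈L / ε⌉₊ : ℝ) - 2) *
                ((⌊(⌈L / ε⌉₊ : ℝ) * x / L⌋₊ : ℝ) ^ 2 + (⌊(⌈L / ε⌉₊ : ℝ) * y / L⌋₊ : ℝ) ^ 2)
              + 6 * (⌈L / ε⌉₊ : ℝ) ^ 2 - 8 * (⌈L / ε⌉₊ : ℝ) + 3) /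
            (((⌈L / ε⌉₊ : ℝ) ^ 4 - (⌈L / ε⌉₊ : ℝ) ^ 2) * (4 * (⌈L / ε⌉₊ : ℝ) - 2))))
      (nhdsWithin 0 (Set.Ioi 0))
      (nhds (3 / L ^ 3 * (x + y) - 3 / L ^ 4 * (x ^ 2 + y ^ 2))) := by
  have hceil : Tendsto (fun ε : ℝ => ⌈L / ε⌉₊) (nhdsWithin 0 (Set.Ioi 0)) atTop := by
    apply tendsto_nat_ceil_atTop.comp
    have h1 : Tendsto (fun ε : ℝ => ε⁻¹) (nhdsWithin 0 (Set.Ioi 0)) atTop :=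
      tendsto_inv_nhdsGT_zero
    have := h1.const_mul_atTop hL
    exact this.congr (fun _ => (div_eq_mul_inv _ _).symm)
  exact (key L x y hL hx0 hy0).comp hceil
end
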